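/- The automorphism group of the Petersen graph is isomorphic to S_5, and in particular has order 120. -/

import Mathlib

/-- The automorphism group of a simple graph `G`, realized as the subgroup of
permutations of the vertex set that preserve adjacency. -/
def graphAut {V : Type*} (G : SimpleGraph V) : Subgroup (Equiv.Perm V) where
  carrier := {f | ∀ x y : V, G.Adj (f x) (f y) ↔ G.Adj x y}
  one_mem' := by intro x y; rfl
  mul_mem' := by
    intro f g hf hg x y
    simpa [Equiv.Perm.mul_apply] using (hf (g x) (g y)).trans (hg x y)
  inv_mem' := by
    intro f hf x y
    simpa using (hf (f⁻¹ x) (f⁻¹ y)).symm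

/-- The Petersen graph, realized as the Kneser graph `K(5,2)`: vertices are the
2-element subsets of a 5-element set, adjacent when disjoint. -/
def petersenGraph : SimpleGraph {s : Finset (Fin 5) // s.card = 2} where
  Adj a b := Disjoint a.1 b.1
  symm := ⟨by intro a b h; exact h.symm⟩
  loopless := ⟨by
    intro a h
    have h2 : a.1 = ∅ := by simpa using h
    have := a.2
    simp [h2] at this⟩

lemma pair_eq {s : Finset (Fin 5)} (hs : s.card = 2) {x y : Fin 5} (hxy : x ≠ y)
    (hx : x ∈ s) (hy : y ∈ s) : s = {x, y} := by
  refine (Finset.eq_of_subset_of_card_le ?_ ?_).symm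
  · intro z hz; rcases Finset.mem_insert.1 hz with rfl | hz
    · exact hx
    · rw [Finset.mem_singleton] at hz; subst hz; exact hy
  · rw [hs, Finset.card_pair hxy]

lemma exists_other {s : Finset (Fin 5)} (hs : s.card = 2) {p : Fin 5} (hp : p ∈ s) :
    ∃ q, q ≠ p ∧ s = {p, q} := by
  obtain ⟨a, b, hab, rfl⟩ := Finset.card_eq_two.1 hs
  rcases Finset.mem_insert.1 hp with h | h
  · subst h; exact ⟨b, hab.symm, rfl⟩
  · rw [Finset.mem_singleton] at h; subst h
    exact ⟨a, hab, Finset.pair_comm a p⟩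

lemma mem_pair_resolve {x y z : Fin 5} (hz : z ∈ ({x, y} : Finset (Fin 5))) :
    z = x ∨ z = y := by simpa using hz

lemma common {t1 t2 t3 t4 : Finset (Fin 5)}
    (h1 : t1.card = 2) (h2 : t2.card = 2) (h3 : t3.card = 2) (h4 : t4.card = 2)
    (d12 : t1 ≠ t2) (d13 : t1 ≠ t3) (d14 : t1 ≠ t4)
    (d23 : t2 ≠ t3) (d24 : t2 ≠ t4) (d34 : t3 ≠ t4)
    (m12 : ¬Disjoint t1 t2) (m13 : ¬Disjoint t1 t3) (m14 : ¬Disjoint t1 t4)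
    (m23 : ¬Disjoint t2 t3) (m24 : ¬Disjoint t2 t4) (m34 : ¬Disjoint t3 t4) :
    ∃ p, p ∈ t1 ∧ p ∈ t2 ∧ p ∈ t3 ∧ p ∈ t4 := by
  obtain ⟨p, hp1, hp2⟩ := Finset.not_disjoint_iff.1 m12
  obtain ⟨q1, hq1p, ht1⟩ := exists_other h1 hp1
  obtain ⟨q2, hq2p, ht2⟩ := exists_other h2 hp2
  have hq12 : q1 ≠ q2 := by rintro rfl; exact d12 (ht1.trans ht2.symm)
  -- if p ∉ t, and t meets t1 and t2, then t = {q1, q2}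
  have key : ∀ t : Finset (Fin 5), t.card = 2 → p ∉ t → ¬Disjoint t1 t → ¬Disjoint t2 t →
      t = {q1, q2} := by
    intro t ht hpt m1 m2
    obtain ⟨x, hx1, hxt⟩ := Finset.not_disjoint_iff.1 m1
    obtain ⟨y, hy2, hyt⟩ := Finset.not_disjoint_iff.1 m2
    have hxq1 : x = q1 := by
      rcases mem_pair_resolve (ht1 ▸ hx1) with rfl | h
      · exact absurd hxt hpt
      · exact h
    have hyq2 : y = q2 := by
      rcases mem_pair_resolve (ht2 ▸ hy2) with rfl | h
      · exact absurd hyt hpt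
      · exact h
    subst hxq1; subst hyq2
    exact pair_eq ht hq12 hxt hyt
  by_cases hp3 : p ∈ t3 <;> by_cases hp4 : p ∈ t4
  · exact ⟨p, hp1, hp2, hp3, hp4⟩
  · -- p ∈ t3, p ∉ t4
    have ht4 : t4 = {q1, q2} := key t4 h4 hp4 m14 m24
    obtain ⟨r, hrp, ht3⟩ := exists_other h3 hp3
    obtain ⟨y, hy3, hy4⟩ := Finset.not_disjoint_iff.1 m34
    rcases mem_pair_resolve (ht3 ▸ hy3) with h | h
    · subst h; exact absurd hy4 hp4
    · subst h
      rcases mem_pair_resolve (ht4 ▸ hy4) with h | h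
      · subst h; exact absurd (ht1.trans ht3.symm) d13
      · subst h; exact absurd (ht2.trans ht3.symm) d23
  · -- p ∉ t3, p ∈ t4
    have ht3 : t3 = {q1, q2} := key t3 h3 hp3 m13 m23
    obtain ⟨r, hrp, ht4⟩ := exists_other h4 hp4
    obtain ⟨y, hy3, hy4⟩ := Finset.not_disjoint_iff.1 m34
    rcases mem_pair_resolve (ht4 ▸ hy4) with h | h
    · subst h; exact absurd hy3 hp3
    · subst h
      rcases mem_pair_resolve (ht3 ▸ hy3) with h | h
      · subst h; exact absurd (ht1.trans ht4.symm) d14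
      · subst h; exact absurd (ht2.trans ht4.symm) d24
  · -- p ∉ t3, p ∉ t4
    have ht3 : t3 = {q1, q2} := key t3 h3 hp3 m13 m23
    have ht4 : t4 = {q1, q2} := key t4 h4 hp4 m14 m24
    exact absurd (ht3.trans ht4.symm) d34

abbrev PV := {s : Finset (Fin 5) // s.card = 2}

def pr (a b : Fin 5) (h : a ≠ b) : PV := ⟨{a, b}, Finset.card_pair h⟩

lemma fadd : ∀ a : Fin 5, a + 1 ≠ a ∧ a + 2 ≠ a ∧ a + 3 ≠ a ∧ a + 4 ≠ a ∧
    a + 1 ≠ a + 2 ∧ a + 1 ≠ a + 3 ∧ a + 1 ≠ a + 4 ∧ a + 2 ≠ a + 3 ∧ a + 2 ≠ a + 4 ∧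
    a + 3 ≠ a + 4 := by decide

lemma fcov : ∀ a x : Fin 5, x ≠ a → x = a + 1 ∨ x = a + 2 ∨ x = a + 3 ∨ x = a + 4 := by decide

lemma third : ∀ a b : Fin 5, ∃ c, a ≠ c ∧ b ≠ c := by decide

lemma star_card : ∀ p : Fin 5, (Finset.univ.filter (fun s : PV => p ∈ s.1)).card = 4 := by decide

lemma pairs_ne {a x y : Fin 5} (hxy : x ≠ y) (hxa : x ≠ a) :
    ({a, x} : Finset (Fin 5)) ≠ {a, y} := by
  intro h
  have : x ∈ ({a, y} : Finset (Fin 5)) := h ▸ (by simp)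
  simp [hxa, hxy] at this

lemma five_pairs {q : Fin 5} {s1 s2 s3 s4 s5 : PV}
    (d12 : s1 ≠ s2) (d13 : s1 ≠ s3) (d14 : s1 ≠ s4) (d15 : s1 ≠ s5)
    (d23 : s2 ≠ s3) (d24 : s2 ≠ s4) (d25 : s2 ≠ s5)
    (d34 : s3 ≠ s4) (d35 : s3 ≠ s5) (d45 : s4 ≠ s5)
    (m1 : q ∈ s1.1) (m2 : q ∈ s2.1) (m3 : q ∈ s3.1) (m4 : q ∈ s4.1) (m5 : q ∈ s5.1) :
    False := by
  have hsub : ({s1, s2, s3, s4, s5} : Finset PV) ⊆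
      Finset.univ.filter (fun s : PV => q ∈ s.1) := by
    intro s hs
    simp only [Finset.mem_insert, Finset.mem_singleton] at hs
    rcases hs with rfl | rfl | rfl | rfl | rfl <;> simp [m1, m2, m3, m4, m5]
  have hc : ({s1, s2, s3, s4, s5} : Finset PV).card = 5 := by
    rw [Finset.card_insert_of_notMem (by simp [d12, d13, d14, d15]),
        Finset.card_insert_of_notMem (by simp [d23, d24, d25]),
        Finset.card_insert_of_notMem (by simp [d34, d35]),
        Finset.card_insert_of_notMem (by simp [d45]), Finset.card_singleton]
  have := Finset.card_le_card hsub
  rw [hc, star_card q] at this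
  omega

def permOfPerm (σ : Equiv.Perm (Fin 5)) : Equiv.Perm PV where
  toFun s := ⟨s.1.image σ, by rw [Finset.card_image_of_injective _ σ.injective, s.2]⟩
  invFun s := ⟨s.1.image σ.symm, by rw [Finset.card_image_of_injective _ σ.symm.injective, s.2]⟩
  left_inv s := by
    apply Subtype.ext
    simp [Finset.image_image]
  right_inv s := by
    apply Subtype.ext
    simp [Finset.image_image]

lemma permOfPerm_mem (σ : Equiv.Perm (Fin 5)) : permOfPerm σ ∈ graphAut petersenGraph := by
  intro x y
  show Disjoint (x.1.image σ) (y.1.image σ) ↔ Disjoint x.1 y.1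
  exact Finset.disjoint_image σ.injective

def toAut : Equiv.Perm (Fin 5) →* graphAut petersenGraph where
  toFun σ := ⟨permOfPerm σ, permOfPerm_mem σ⟩
  map_one' := by
    apply Subtype.ext; apply Equiv.ext; intro s
    apply Subtype.ext; simp [permOfPerm]
  map_mul' σ τ := by
    apply Subtype.ext; apply Equiv.ext; intro s
    apply Subtype.ext
    simp [permOfPerm, Finset.image_image, Function.comp]
lemma toAut_injective : Function.Injective toAut := by
  rw [← MonoidHom.ker_eq_bot_iff, eq_bot_iff]
  intro σ hσ
  simp only [MonoidHom.mem_ker] at hσ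
  have hs : ∀ s : PV, (s.1.image σ) = s.1 := by
    intro s
    have := congrArg (fun F => (F.1 s).1) hσ
    simpa [toAut, permOfPerm] using this
  have hfix : ∀ a : Fin 5, σ a = a := by
    intro a
    obtain ⟨h1, h2, _, _, h12, _⟩ := fadd a
    have e1 : Finset.image (⇑σ) ({a, a + 1} : Finset (Fin 5)) = {a, a + 1} :=
      hs (pr a (a + 1) h1.symm)
    have e2 : Finset.image (⇑σ) ({a, a + 2} : Finset (Fin 5)) = {a, a + 2} :=
      hs (pr a (a + 2) h2.symm)
    have m1 : σ a ∈ ({a, a + 1} : Finset (Fin 5)) :=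
      e1 ▸ Finset.mem_image_of_mem σ (by simp)
    have m2 : σ a ∈ ({a, a + 2} : Finset (Fin 5)) :=
      e2 ▸ Finset.mem_image_of_mem σ (by simp)
    simp only [Finset.mem_insert, Finset.mem_singleton] at m1 m2
    rcases m1 with h | h
    · exact h
    · rcases m2 with h' | h'
      · exact h'
      · exact absurd (h ▸ h') h12
  exact Subgroup.mem_bot.2 (Equiv.ext hfix)

lemma vne {a x y : Fin 5} (hxy : x ≠ y) (hxa : x ≠ a) {hx : a ≠ x} {hy : a ≠ y} :
    pr a x hx ≠ pr a y hy :=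
  fun h => pairs_ne hxy hxa (congrArg Subtype.val h)

lemma toAut_surjective : Function.Surjective toAut := by
  rintro ⟨F, hF⟩
  have hF' : ∀ x y : PV, Disjoint (F x).1 (F y).1 ↔ Disjoint x.1 y.1 := hF
  have hstar : ∀ a : Fin 5, ∃ p : Fin 5, ∀ x : Fin 5, ∀ hx : a ≠ x, p ∈ (F (pr a x hx)).1 := by
    intro a
    obtain ⟨h1, h2, h3, h4, h12, h13, h14, h23, h24, h34⟩ := fadd a
    set v1 := pr a (a + 1) h1.symm with hv1
    set v2 := pr a (a + 2) h2.symm with hv2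
    set v3 := pr a (a + 3) h3.symm with hv3
    set v4 := pr a (a + 4) h4.symm with hv4
    have meets : ∀ x y : PV, a ∈ x.1 → a ∈ y.1 → ¬Disjoint (F x).1 (F y).1 :=
      fun x y hx hy hd =>
        (Finset.not_disjoint_iff.2 ⟨a, hx, hy⟩) ((hF' x y).1 hd)
    have amem : ∀ (x : Fin 5) (hx : a ≠ x), a ∈ (pr a x hx).1 := fun x hx => by simp [pr]
    have Fne : ∀ x y : PV, x ≠ y → (F x).1 ≠ (F y).1 :=
      fun x y h he => h (F.injective (Subtype.ext he))
    obtain ⟨p, hp1, hp2, hp3, hp4⟩ :=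
      common (F v1).2 (F v2).2 (F v3).2 (F v4).2
        (Fne _ _ (vne h12 h1)) (Fne _ _ (vne h13 h1)) (Fne _ _ (vne h14 h1))
        (Fne _ _ (vne h23 h2)) (Fne _ _ (vne h24 h2)) (Fne _ _ (vne h34 h3))
        (meets _ _ (amem _ _) (amem _ _)) (meets _ _ (amem _ _) (amem _ _))
        (meets _ _ (amem _ _) (amem _ _)) (meets _ _ (amem _ _) (amem _ _))
        (meets _ _ (amem _ _) (amem _ _)) (meets _ _ (amem _ _) (amem _ _))
    refine ⟨p, fun x hx => ?_⟩
    rcases fcov a x (Ne.symm hx) with rfl | rfl | rfl | rfl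
    · exact hp1
    · exact hp2
    · exact hp3
    · exact hp4
  choose g hg using hstar
  have ginj : Function.Injective g := by
    intro a b hab
    by_contra hne
    obtain ⟨c, hac, hbc⟩ := third a b
    obtain ⟨h1, h2, h3, h4, h12, h13, h14, h23, h24, h34⟩ := fadd a
    have hw : ∀ (x : Fin 5) (hx : a ≠ x), pr b c hbc ≠ pr a x hx := by
      intro x hx h
      have : a ∈ ({b, c} : Finset (Fin 5)) := by
        have := congrArg Subtype.val h
        simp only [pr] at this
        rw [this]; simp
      simp only [Finset.mem_insert, Finset.mem_singleton] at this
      rcases this with rfl | rfl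
      · exact hne rfl
      · exact hac rfl
    have Fne : ∀ x y : PV, x ≠ y → F x ≠ F y := fun x y h => F.injective.ne h
    exact five_pairs (q := g a)
      (Fne _ _ (vne h12 h1)) (Fne _ _ (vne h13 h1)) (Fne _ _ (vne h14 h1))
      (Fne _ _ (hw _ h1.symm).symm)
      (Fne _ _ (vne h23 h2)) (Fne _ _ (vne h24 h2)) (Fne _ _ (hw _ h2.symm).symm)
      (Fne _ _ (vne h34 h3)) (Fne _ _ (hw _ h3.symm).symm)
      (Fne _ _ (hw _ h4.symm).symm)
      (hg a _ h1.symm) (hg a _ h2.symm) (hg a _ h3.symm) (hg a _ h4.symm)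
      (hab ▸ hg b c hbc)
  have gbij : Function.Bijective g := Finite.injective_iff_bijective.1 ginj
  refine ⟨Equiv.ofBijective g gbij, ?_⟩
  apply Subtype.ext; apply Equiv.ext; intro v
  apply Subtype.ext
  show Finset.image g v.1 = (F v).1
  obtain ⟨x, y, hxy, hv⟩ := Finset.card_eq_two.1 v.2
  have hv' : v = pr x y hxy := Subtype.ext hv
  have hgx : g x ∈ (F v).1 := by rw [hv']; exact hg x y hxy
  have hgy : g y ∈ (F v).1 := by
    have h2 : v = pr y x hxy.symm := Subtype.ext (by rw [hv]; exact Finset.pair_comm x y)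
    rw [h2]; exact hg y x hxy.symm
  have hgg : g x ≠ g y := fun h => hxy (ginj h)
  rw [pair_eq (F v).2 hgg hgx hgy, hv]
  simp

/-- The automorphism group of the Petersen graph is isomorphic to `S_5`; in
particular it has order `120`. -/
theorem aut_petersen :
    Nonempty ((graphAut petersenGraph) ≃* Equiv.Perm (Fin 5)) ∧
    Nat.card (graphAut petersenGraph) = 120 := by
  have e := MulEquiv.ofBijective toAut ⟨toAut_injective, toAut_surjective⟩
  refine ⟨⟨e.symm⟩, ?_⟩
  rw [← Nat.card_congr e.toEquiv]
  simp only [Nat.card_eq_fintype_card, Fintype.card_perm, Fintype.card_fin]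
  decide
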